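/- (Random Hoeffding inequality) Let M ~ Bin(m, p) with p > 0, and conditioned on M, let X₁,...,X_M be i.i.d. random variables taking values in [a, b]; let X̄ be their empirical mean (X̄ = E[X₁] if M = 0). Then for any t > 0, Pr(|X̄ − E[X₁]| ≥ t/p) ≤ 3·exp(−m·t²/(8p(b−a)²)). -/

import Mathlib

open MeasureTheory ProbabilityTheory Finset

/-- pmf of Bin(m,p) at r -/
noncomputable def binomPMF (m : ℕ) (p : ℝ) (r : ℕ) : ℝ :=
  (m.choose r : ℝ) * p ^ r * (1 - p) ^ (m - r)


/-- pointwise convexity bound -/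
lemma exp_le_aux {y c l : ℝ} (hc : 0 < c) (hy : |y| ≤ c) :
    Real.exp (l * y) ≤ (Real.exp (l*c) + Real.exp (-(l*c)))/2
      + y * ((Real.exp (l*c) - Real.exp (-(l*c)))/(2*c)) := by
  have h1 : -c ≤ y := (abs_le.1 hy).1
  have h2 : y ≤ c := (abs_le.1 hy).2
  have hα : (0:ℝ) ≤ (c - y)/(2*c) := by
    apply div_nonneg (by linarith) (by linarith)
  have hβ : (0:ℝ) ≤ (c + y)/(2*c) := by
    apply div_nonneg (by linarith) (by linarith)
  have hαβ : (c - y)/(2*c) + (c + y)/(2*c) = 1 := by field_simp; ring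
  have := convexOn_exp.2 (Set.mem_univ (-(l*c))) (Set.mem_univ (l*c)) hα hβ hαβ
  simp only [smul_eq_mul] at this
  have harg : (c - y)/(2*c) * -(l*c) + (c + y)/(2*c) * (l*c) = l * y := by
    field_simp; ring
  rw [harg] at this
  refine this.trans (le_of_eq ?_)
  field_simp
  ring

/-- Sub-Gaussian mgf bound for bounded centered random variables. -/
lemma mgf_le_of_bounded {Ω : Type*} [MeasurableSpace Ω] {μ : Measure Ω} [IsProbabilityMeasure μ]
    {Y : Ω → ℝ} (hY : Measurable Y) {c : ℝ} (hc : 0 < c) (hYb : ∀ ω, |Y ω| ≤ c)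
    (hY0 : ∫ ω, Y ω ∂μ = 0) (l : ℝ) :
    mgf Y μ l ≤ Real.exp (l^2 * c^2 / 2) := by
  have hYint : Integrable Y μ := by
    refine Integrable.mono' (integrable_const c) hY.aestronglyMeasurable ?_
    filter_upwards with ω using hYb ω
  have hint2 : Integrable (fun ω => (Real.exp (l*c) + Real.exp (-(l*c)))/2
      + Y ω * ((Real.exp (l*c) - Real.exp (-(l*c)))/(2*c))) μ :=
    (integrable_const _).add (hYint.mul_const _)
  have hexpint : Integrable (fun ω => Real.exp (l * Y ω)) μ := by
    refine Integrable.mono' (integrable_const (Real.exp (|l| * c)))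
      ((hY.const_mul l).exp).aestronglyMeasurable ?_
    filter_upwards with ω
    rw [Real.norm_eq_abs, abs_of_nonneg (Real.exp_pos _).le]
    refine Real.exp_le_exp.2 ?_
    calc l * Y ω ≤ |l * Y ω| := le_abs_self _
      _ = |l| * |Y ω| := abs_mul _ _
      _ ≤ |l| * c := by gcongr; exact hYb ω
  have step : mgf Y μ l ≤ ∫ ω, ((Real.exp (l*c) + Real.exp (-(l*c)))/2
      + Y ω * ((Real.exp (l*c) - Real.exp (-(l*c)))/(2*c))) ∂μ := by
    refine integral_mono hexpint hint2 fun ω => ?_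
    exact exp_le_aux hc (hYb ω)
  rw [integral_add (integrable_const _) (hYint.mul_const _), integral_const,
    integral_mul_const, hY0, zero_mul, add_zero] at step
  simp only [probReal_univ, smul_eq_mul, one_mul] at step
  refine step.trans ?_
  have := Real.cosh_le_exp_half_sq (l*c)
  rw [Real.cosh_eq] at this
  calc (Real.exp (l*c) + Real.exp (-(l*c)))/2 ≤ Real.exp ((l*c)^2/2) := this
    _ = Real.exp (l^2*c^2/2) := by ring_nf

/-- One-sided Hoeffding-type tail bound for sums of independent bounded centered variables. -/
lemma sum_tail_le {Ω : Type*} [MeasurableSpace Ω] {μ : Measure Ω} [IsProbabilityMeasure μ]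
    {Y : ℕ → Ω → ℝ} (hmeas : ∀ i, Measurable (Y i))
    (hindep : iIndepFun Y μ)
    {c : ℝ} (hc : 0 < c) (hb : ∀ i ω, |Y i ω| ≤ c) (h0 : ∀ i, ∫ ω, Y i ω ∂μ = 0)
    {r : ℕ} (hr : 0 < r) {ε : ℝ} (hε : 0 < ε) :
    (μ {ω | ε ≤ ∑ i ∈ range r, Y i ω}).toReal ≤ Real.exp (-(ε^2) / (2 * r * c^2)) := by
  set l : ℝ := ε / (r * c^2) with hl
  have hrpos : (0:ℝ) < r := Nat.cast_pos.2 hr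
  have hlpos : 0 < l := by apply div_pos hε; positivity
  have hint : Integrable (fun ω => Real.exp (l * (∑ i ∈ range r, Y i) ω)) μ := by
    refine Integrable.mono' (integrable_const (Real.exp (l * (r * c))))
      ?_ ?_
    · have : Measurable fun ω => (∑ i ∈ range r, Y i) ω := by
        simp only [Finset.sum_apply]
        exact Finset.measurable_sum (range r) (fun i _ => hmeas i)
      exact ((this.const_mul l).exp).aestronglyMeasurable
    · filter_upwards with ω
      rw [Real.norm_eq_abs, abs_of_nonneg (Real.exp_pos _).le]
      refine Real.exp_le_exp.2 (mul_le_mul_of_nonneg_left ?_ hlpos.le)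
      rw [Finset.sum_apply]
      calc ∑ i ∈ range r, Y i ω ≤ ∑ i ∈ range r, c :=
            Finset.sum_le_sum fun i _ => (abs_le.1 (hb i ω)).2
        _ = r * c := by simp [mul_comm]
  have hset : {ω | ε ≤ ∑ i ∈ range r, Y i ω} = {ω | ε ≤ (∑ i ∈ range r, Y i) ω} := by
    ext ω; simp [Finset.sum_apply]
  have chernoff := measure_ge_le_exp_mul_mgf (μ := μ) (X := ∑ i ∈ range r, Y i)
    (t := l) ε hlpos.le hint
  rw [hset]
  refine chernoff.trans ?_
  have hmgf : mgf (∑ i ∈ range r, Y i) μ l ≤ Real.exp (r * (l^2 * c^2 / 2)) := by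
    rw [hindep.mgf_sum hmeas]
    calc ∏ i ∈ range r, mgf (Y i) μ l ≤ ∏ i ∈ range r, Real.exp (l^2 * c^2/2) :=
          Finset.prod_le_prod (fun i _ => mgf_nonneg)
            (fun i _ => mgf_le_of_bounded (hmeas i) hc (hb i) (h0 i) l)
      _ = Real.exp (r * (l^2*c^2/2)) := by
          rw [Finset.prod_const, card_range, ← Real.exp_nat_mul]
  calc Real.exp (-l * ε) * mgf (∑ i ∈ range r, Y i) μ l
      ≤ Real.exp (-l * ε) * Real.exp (r * (l^2 * c^2 / 2)) :=
        mul_le_mul_of_nonneg_left hmgf (Real.exp_pos _).le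
    _ = Real.exp (-l * ε + r * (l^2 * c^2 / 2)) := (Real.exp_add _ _).symm
    _ = Real.exp (-(ε^2) / (2 * r * c^2)) := by
        congr 1
        rw [hl]
        field_simp
        ring

/-- Two-sided version. -/
lemma abs_sum_tail_le {Ω : Type*} [MeasurableSpace Ω] {μ : Measure Ω} [IsProbabilityMeasure μ]
    {Y : ℕ → Ω → ℝ} (hmeas : ∀ i, Measurable (Y i))
    (hindep : iIndepFun Y μ)
    {c : ℝ} (hc : 0 < c) (hb : ∀ i ω, |Y i ω| ≤ c) (h0 : ∀ i, ∫ ω, Y i ω ∂μ = 0)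
    {r : ℕ} (hr : 0 < r) {ε : ℝ} (hε : 0 < ε) :
    (μ {ω | ε ≤ |∑ i ∈ range r, Y i ω|}).toReal ≤ 2 * Real.exp (-(ε^2) / (2 * r * c^2)) := by
  have hsub : {ω | ε ≤ |∑ i ∈ range r, Y i ω|} ⊆
      {ω | ε ≤ ∑ i ∈ range r, Y i ω} ∪ {ω | ε ≤ ∑ i ∈ range r, (-Y i) ω} := by
    intro ω hω
    simp only [Set.mem_setOf_eq] at hω
    rcases le_abs.1 hω with h | h
    · exact Or.inl h
    · refine Or.inr ?_
      simp only [Set.mem_setOf_eq, Pi.neg_apply, Finset.sum_neg_distrib]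
      linarith
  have hneg : ∀ i, Measurable ((-Y i : Ω → ℝ)) := fun i => (hmeas i).neg
  have hindep' : iIndepFun (fun i => -Y i) μ := by
    have := hindep.comp (fun _ => (Neg.neg : ℝ → ℝ)) (fun _ => measurable_neg)
    exact this
  have h1 := sum_tail_le hmeas hindep hc hb h0 hr hε
  have h2 := sum_tail_le (Y := fun i => -Y i) hneg hindep' hc
    (fun i ω => by simpa using hb i ω)
    (fun i => by simp [integral_neg, h0 i]) hr hε
  calc (μ {ω | ε ≤ |∑ i ∈ range r, Y i ω|}).toReal
      ≤ (μ ({ω | ε ≤ ∑ i ∈ range r, Y i ω} ∪ {ω | ε ≤ ∑ i ∈ range r, (-Y i) ω})).toReal := by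
        apply ENNReal.toReal_mono (measure_ne_top _ _) (measure_mono hsub)
    _ ≤ (μ {ω | ε ≤ ∑ i ∈ range r, Y i ω}).toReal
        + (μ {ω | ε ≤ ∑ i ∈ range r, (-Y i) ω}).toReal := by
        rw [← ENNReal.toReal_add (measure_ne_top _ _) (measure_ne_top _ _)]
        exact ENNReal.toReal_mono (by finiteness) (measure_union_le _ _)
    _ ≤ _ := by rw [two_mul]; exact add_le_add h1 h2

lemma binomPMF_nonneg {m : ℕ} {p : ℝ} (hp : 0 ≤ p) (hp1 : p ≤ 1) (r : ℕ) :
    0 ≤ binomPMF m p r := by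
  unfold binomPMF
  have h1 : (0:ℝ) ≤ 1 - p := by linarith
  positivity

lemma binomPMF_sum {m : ℕ} {p : ℝ} : ∑ r ∈ range (m+1), binomPMF m p r = 1 := by
  rw [show ∑ r ∈ range (m+1), binomPMF m p r
      = ∑ r ∈ range (m+1), p^r * (1-p)^(m-r) * (m.choose r) from
    Finset.sum_congr rfl (fun r _ => by unfold binomPMF; ring), ← add_pow]
  simp

lemma binomPMF_eq_zero {m r : ℕ} {p : ℝ} (h : m < r) : binomPMF m p r = 0 := by
  unfold binomPMF
  rw [Nat.choose_eq_zero_of_lt h]; simp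

lemma binom_chernoff {m : ℕ} {p : ℝ} (hp : 0 < p) (hp1 : p ≤ 1) :
    ∑ r ∈ (range (m+1)).filter (fun r : ℕ => 2*(r:ℝ) < m*p), binomPMF m p r
      ≤ Real.exp (-((m:ℝ)*p)/8) := by
  set l : ℝ := Real.log 2 with hl
  have hl2 : Real.exp (-l) = 1/2 := by
    rw [Real.exp_neg, Real.exp_log two_pos]; norm_num
  have hlpos : 0 < l := Real.log_pos one_lt_two
  calc ∑ r ∈ (range (m+1)).filter (fun r : ℕ => 2*(r:ℝ) < m*p), binomPMF m p r
      ≤ ∑ r ∈ (range (m+1)).filter (fun r : ℕ => 2*(r:ℝ) < m*p),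
          binomPMF m p r * Real.exp (l * ((m:ℝ)*p/2 - r)) := by
        apply Finset.sum_le_sum
        intro r hr
        rw [Finset.mem_filter] at hr
        have h1 : (0:ℝ) ≤ (m:ℝ)*p/2 - r := by linarith [hr.2]
        nth_rewrite 1 [show binomPMF m p r = binomPMF m p r * 1 by ring]
        apply mul_le_mul_of_nonneg_left _ (binomPMF_nonneg hp.le hp1 r)
        rw [← Real.exp_zero]
        exact Real.exp_le_exp.2 (by positivity)
    _ ≤ ∑ r ∈ range (m+1), binomPMF m p r * Real.exp (l * ((m:ℝ)*p/2 - r)) := by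
        apply Finset.sum_le_sum_of_subset_of_nonneg (Finset.filter_subset _ _)
        intro r _ _
        exact mul_nonneg (binomPMF_nonneg hp.le hp1 r) (Real.exp_pos _).le
    _ = Real.exp (l * ((m:ℝ)*p/2)) * ∑ r ∈ range (m+1), (p/2)^r * (1-p)^(m-r) * (m.choose r) := by
        rw [Finset.mul_sum]
        apply Finset.sum_congr rfl
        intro r _
        unfold binomPMF
        rw [show l * ((m:ℝ)*p/2 - (r:ℝ)) = l*((m:ℝ)*p/2) + (r:ℝ)*(-l) by ring,
          Real.exp_add, Real.exp_nat_mul, hl2]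
        ring
    _ = Real.exp (l * ((m:ℝ)*p/2)) * (p/2 + (1-p))^m := by
        rw [add_pow]
    _ ≤ Real.exp (l * ((m:ℝ)*p/2)) * (Real.exp (-(p/2)))^m := by
        apply mul_le_mul_of_nonneg_left _ (Real.exp_pos _).le
        apply pow_le_pow_left₀ (by linarith)
        have := Real.add_one_le_exp (-(p/2))
        linarith
    _ = Real.exp ((m:ℝ)*p*(l-1)/2) := by
        rw [← Real.exp_nat_mul, ← Real.exp_add]
        congr 1
        ring
    _ ≤ Real.exp (-((m:ℝ)*p)/8) := by
        apply Real.exp_le_exp.2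
        have hlog : l ≤ 3/4 := by
          rw [hl]
          have := Real.log_two_lt_d9
          linarith
        have hmp : (0:ℝ) ≤ (m:ℝ)*p := by positivity
        nlinarith

/-- Random Hoeffding inequality: the empirical mean of a binomially-random number `M`
of i.i.d. variables in `[a,b]`, with `M` independent of the variables, concentrates. -/
theorem random_hoeffding (Ω : Type*) [MeasurableSpace Ω]
    (μ : Measure Ω) [IsProbabilityMeasure μ]
    (m : ℕ) (p : ℝ) (hp : 0 < p) (hp1 : p ≤ 1)
    (M : Ω → ℕ) (hMmeas : Measurable M)
    (hMdist : ∀ r, μ {ω | M ω = r} = ENNReal.ofReal (binomPMF m p r))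
    (a b : ℝ) (hab : a < b)
    (X : ℕ → Ω → ℝ) (hXmeas : ∀ i, Measurable (X i))
    (hXrange : ∀ i ω, X i ω ∈ Set.Icc a b)
    (hXid : ∀ i, Measure.map (X i) μ = Measure.map (X 0) μ)
    (hXindep : iIndepFun X μ)
    (hMX : IndepFun M (fun ω i => X i ω) μ)
    (Xbar : Ω → ℝ)
    (hXbar : ∀ ω, Xbar ω =
      if M ω = 0 then ∫ ω', X 0 ω' ∂μ
      else (∑ i ∈ Finset.range (M ω), X i ω) / (M ω))
    (t : ℝ) (ht : 0 < t) :
    (μ {ω | t / p ≤ |Xbar ω - ∫ ω', X 0 ω' ∂μ|}).toReal ≤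
      3 * Real.exp (-((m : ℝ) * t ^ 2) / (8 * p * (b - a) ^ 2)) := by
  have hc : (0:ℝ) < b - a := sub_pos.2 hab
  have hs : (0:ℝ) < t / p := div_pos ht hp
  set μbar := ∫ ω', X 0 ω' ∂μ with hμbar
  -- integrability of the X i
  have hXint : ∀ i, Integrable (X i) μ := by
    intro i
    refine Integrable.mono' (integrable_const (max |a| |b|))
      (hXmeas i).aestronglyMeasurable ?_
    filter_upwards with ω
    exact abs_le_max_abs_abs (hXrange i ω).1 (hXrange i ω).2
  -- the mean lies in [a, b]
  have hmean_ab : μbar ∈ Set.Icc a b := by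
    constructor
    · have h := integral_mono (integrable_const a) (hXint 0) (fun ω => (hXrange 0 ω).1)
      simpa [integral_const] using h
    · have h := integral_mono (hXint 0) (integrable_const b) (fun ω => (hXrange 0 ω).2)
      simpa [integral_const] using h
  -- Xbar takes values in [a, b]
  have hXbar_mem : ∀ ω, Xbar ω ∈ Set.Icc a b := by
    intro ω
    rw [hXbar ω]
    by_cases h0 : M ω = 0
    · simpa [h0] using hmean_ab
    · simp only [h0, if_false]
      have hr : (0:ℝ) < (M ω : ℝ) := by
        exact_mod_cast Nat.pos_of_ne_zero h0
      constructor
      · rw [le_div_iff₀ hr]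
        calc a * (M ω : ℝ) = ∑ _i ∈ Finset.range (M ω), a := by
              simp [mul_comm]
          _ ≤ ∑ i ∈ Finset.range (M ω), X i ω :=
              Finset.sum_le_sum fun i _ => (hXrange i ω).1
      · rw [div_le_iff₀ hr]
        calc ∑ i ∈ Finset.range (M ω), X i ω ≤ ∑ _i ∈ Finset.range (M ω), b :=
              Finset.sum_le_sum fun i _ => (hXrange i ω).2
          _ = b * (M ω : ℝ) := by simp [mul_comm]
  by_cases hcase : p * (b - a) < t
  · -- trivial case : the event is empty
    have hempty : {ω | t / p ≤ |Xbar ω - μbar|} = ∅ := by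
      rw [Set.eq_empty_iff_forall_notMem]
      intro ω hω
      simp only [Set.mem_setOf_eq] at hω
      have h1 : |Xbar ω - μbar| ≤ b - a := by
        rw [abs_sub_le_iff]
        constructor <;> [skip; skip] <;>
          [linarith [(hXbar_mem ω).1, (hXbar_mem ω).2, hmean_ab.1, hmean_ab.2];
           linarith [(hXbar_mem ω).1, (hXbar_mem ω).2, hmean_ab.1, hmean_ab.2]]
      have h2 : b - a < t / p := by
        rw [lt_div_iff₀ hp]; linarith [mul_comm p (b-a)]
      linarith
    rw [hempty]
    simp only [measure_empty, ENNReal.toReal_zero]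
    positivity
  · -- main case : t ≤ p * (b - a)
    push_neg at hcase
    -- centered variables
    set Y : ℕ → Ω → ℝ := fun i ω => X i ω - μbar with hY
    have hYmeas : ∀ i, Measurable (Y i) := fun i => (hXmeas i).sub_const μbar
    have hYb : ∀ i ω, |Y i ω| ≤ b - a := by
      intro i ω
      rw [abs_sub_le_iff]
      exact ⟨by linarith [(hXrange i ω).2, hmean_ab.1],
             by linarith [(hXrange i ω).1, hmean_ab.2]⟩
    have hXmean : ∀ i, ∫ ω, X i ω ∂μ = μbar := by
      intro i
      have h1 : ∫ ω, X i ω ∂μ = ∫ y, y ∂(Measure.map (X i) μ) :=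
        (integral_map (hXmeas i).aemeasurable measurable_id.aestronglyMeasurable).symm
      have h2 : ∫ y, y ∂(Measure.map (X 0) μ) = ∫ ω, X 0 ω ∂μ :=
        integral_map (hXmeas 0).aemeasurable measurable_id.aestronglyMeasurable
      rw [h1, hXid i, h2]
    have hY0 : ∀ i, ∫ ω, Y i ω ∂μ = 0 := by
      intro i
      simp only [hY]
      rw [integral_sub (hXint i) (integrable_const μbar), integral_const, hXmean i]
      simp
    have hYindep : iIndepFun Y μ := by
      have := hXindep.comp (fun _ => fun x : ℝ => x - μbar)
        (fun _ => measurable_id.sub_const μbar)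
      exact this
    -- the partition pieces
    set A : ℕ → Set Ω := fun r =>
      if r = 0 then (∅ : Set Ω)
      else {ω | (r:ℝ) * (t/p) ≤ |∑ i ∈ Finset.range r, Y i ω|} with hA
    set B : ℕ → Set Ω := fun r => {ω | M ω = r} ∩ A r with hB
    have hAmeas : ∀ r, MeasurableSet (A r) := by
      intro r
      rw [hA]
      by_cases h0 : r = 0
      · simp [h0]
      · simp only [h0, if_false]
        have hsum : Measurable fun ω => ∑ i ∈ Finset.range r, Y i ω :=
          Finset.measurable_sum (Finset.range r) (fun i _ => hYmeas i)
        exact measurableSet_le measurable_const hsum.abs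
    have hBmeas : ∀ r, MeasurableSet (B r) := fun r =>
      (hMmeas (measurableSet_singleton r)).inter (hAmeas r)
    -- the event equals the union of the pieces
    have hEeq : {ω | t / p ≤ |Xbar ω - μbar|} = ⋃ r, B r := by
      ext ω
      simp only [Set.mem_setOf_eq, Set.mem_iUnion, hB, Set.mem_inter_iff]
      constructor
      · intro hω
        refine ⟨M ω, rfl, ?_⟩
        rw [hA]
        by_cases h0 : M ω = 0
        · exfalso
          rw [hXbar ω, if_pos h0] at hω
          simp only [sub_self, abs_zero] at hω
          linarith
        · simp only [h0, if_false, Set.mem_setOf_eq]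
          have hr : (0:ℝ) < (M ω : ℝ) := by exact_mod_cast Nat.pos_of_ne_zero h0
          rw [hXbar ω, if_neg h0] at hω
          have heq : (∑ i ∈ Finset.range (M ω), X i ω) / (M ω : ℝ) - μbar
              = (∑ i ∈ Finset.range (M ω), Y i ω) / (M ω : ℝ) := by
            simp only [hY]
            rw [Finset.sum_sub_distrib]
            field_simp
            simp
          rw [heq, abs_div, abs_of_pos hr, le_div_iff₀ hr] at hω
          calc (M ω : ℝ) * (t/p) = (t/p) * (M ω : ℝ) := mul_comm _ _
            _ ≤ |∑ i ∈ Finset.range (M ω), Y i ω| := hω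
      · rintro ⟨r, hMr, hAr⟩
        rw [hA] at hAr
        by_cases h0 : r = 0
        · simp [h0] at hAr
        · simp only [h0, if_false, Set.mem_setOf_eq] at hAr
          have hr : (0:ℝ) < (r : ℝ) := by exact_mod_cast Nat.pos_of_ne_zero h0
          rw [hXbar ω, if_neg (hMr ▸ h0), hMr]
          have heq : (∑ i ∈ Finset.range r, X i ω) / (r : ℝ) - μbar
              = (∑ i ∈ Finset.range r, Y i ω) / (r : ℝ) := by
            simp only [hY]
            rw [Finset.sum_sub_distrib]
            field_simp
            simp
          rw [heq, abs_div, abs_of_pos hr, le_div_iff₀ hr]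
          calc t/p * (r:ℝ) = (r:ℝ) * (t/p) := mul_comm _ _
            _ ≤ _ := hAr
    -- decompose the measure
    have hdisj : Pairwise (Function.onFun Disjoint B) := by
      intro r r' hrr'
      simp only [Function.onFun, hB]
      refine Set.disjoint_left.2 ?_
      rintro ω ⟨h1, -⟩ ⟨h2, -⟩
      exact hrr' (h1 ▸ h2 ▸ rfl)
    have hmeasE : μ {ω | t / p ≤ |Xbar ω - μbar|} = ∑' r, μ (B r) := by
      rw [hEeq, measure_iUnion hdisj hBmeas]
    -- pieces beyond m vanish
    have hvanish : ∀ r ∉ Finset.range (m+1), μ (B r) = 0 := by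
      intro r hr
      rw [Finset.mem_range, not_lt] at hr
      have h1 : μ (B r) ≤ μ {ω | M ω = r} := measure_mono Set.inter_subset_left
      rw [hMdist r, binomPMF_eq_zero (by omega), ENNReal.ofReal_zero] at h1
      exact le_antisymm h1 zero_le
    have hsum : μ {ω | t / p ≤ |Xbar ω - μbar|} = ∑ r ∈ Finset.range (m+1), μ (B r) := by
      rw [hmeasE, tsum_eq_sum hvanish]
    rw [hsum, ENNReal.toReal_sum (fun r _ => measure_ne_top μ (B r))]
    -- split the sum
    set R := Real.exp (-((m : ℝ) * t ^ 2) / (8 * p * (b - a) ^ 2)) with hR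
    have hRpos : 0 < R := Real.exp_pos _
    have hpmf : ∀ r, (μ {ω | M ω = r}).toReal = binomPMF m p r := by
      intro r
      rw [hMdist r, ENNReal.toReal_ofReal (binomPMF_nonneg hp.le hp1 r)]
    rw [← Finset.sum_filter_add_sum_filter_not (Finset.range (m+1))
      (fun r : ℕ => 2*(r:ℝ) < m*p)]
    have hsmall : ∑ r ∈ (Finset.range (m+1)).filter (fun r : ℕ => 2*(r:ℝ) < m*p),
        (μ (B r)).toReal ≤ R := by
      calc ∑ r ∈ (Finset.range (m+1)).filter (fun r : ℕ => 2*(r:ℝ) < m*p),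
            (μ (B r)).toReal
          ≤ ∑ r ∈ (Finset.range (m+1)).filter (fun r : ℕ => 2*(r:ℝ) < m*p),
            binomPMF m p r := by
            refine Finset.sum_le_sum fun r _ => ?_
            rw [← hpmf r]
            exact ENNReal.toReal_mono (measure_ne_top _ _)
              (measure_mono Set.inter_subset_left)
        _ ≤ Real.exp (-((m:ℝ)*p)/8) := binom_chernoff hp hp1
        _ ≤ R := by
            rw [hR]
            apply Real.exp_le_exp.2
            rw [div_le_div_iff₀ (by norm_num : (0:ℝ) < 8)
              (mul_pos (by linarith : (0:ℝ) < 8*p) (pow_pos hc 2))]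
            have h1 : t^2 ≤ p^2 * (b-a)^2 := by nlinarith
            nlinarith [Nat.cast_nonneg (α := ℝ) m, sq_nonneg (b-a)]
    have hbig : ∑ r ∈ (Finset.range (m+1)).filter (fun r : ℕ => ¬ (2*(r:ℝ) < m*p)),
        (μ (B r)).toReal ≤ 2 * R := by
      calc ∑ r ∈ (Finset.range (m+1)).filter (fun r : ℕ => ¬ (2*(r:ℝ) < m*p)),
            (μ (B r)).toReal
          ≤ ∑ r ∈ (Finset.range (m+1)).filter (fun r : ℕ => ¬ (2*(r:ℝ) < m*p)),
            binomPMF m p r * (2 * R) := by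
            refine Finset.sum_le_sum fun r hr => ?_
            rw [Finset.mem_filter, not_lt] at hr
            by_cases h0 : r = 0
            · have : B r = ∅ := by
                rw [hB, hA]
                simp [h0]
              rw [this]
              simp only [measure_empty, ENNReal.toReal_zero]
              exact mul_nonneg (binomPMF_nonneg hp.le hp1 r) (by positivity)
            · -- independence factorization
              have hrpos : (0:ℝ) < (r:ℝ) := by exact_mod_cast Nat.pos_of_ne_zero h0
              set Bset : Set (ℕ → ℝ) :=
                {g : ℕ → ℝ | (r:ℝ) * (t/p) ≤ |∑ i ∈ Finset.range r, (g i - μbar)|}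
                with hBset
              have hBsetMeas : MeasurableSet Bset := by
                have hsum : Measurable fun g : ℕ → ℝ =>
                    ∑ i ∈ Finset.range r, (g i - μbar) :=
                  Finset.measurable_sum (Finset.range r)
                    (fun i _ => (measurable_pi_apply (X := fun _ : ℕ => ℝ) i).sub_const μbar)
                exact measurableSet_le measurable_const hsum.abs
              have hApre : A r = (fun ω i => X i ω) ⁻¹' Bset := by
                rw [hA]
                simp only [h0, if_false]
                rfl
              have hfact := hMX.measure_inter_preimage_eq_mul {r} Bset
                (measurableSet_singleton r) hBsetMeas
              have hBr : B r = M ⁻¹' {r} ∩ (fun ω i => X i ω) ⁻¹' Bset := by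
                have h' : B r = {ω | M ω = r} ∩ A r := rfl
                rw [h', hApre]
                rfl
              rw [hBr, hfact, ENNReal.toReal_mul]
              have hMr : (μ (M ⁻¹' {r})).toReal = binomPMF m p r := hpmf r
              rw [hMr]
              refine mul_le_mul_of_nonneg_left ?_ (binomPMF_nonneg hp.le hp1 r)
              -- Hoeffding bound on the second factor
              have hpre : (fun ω i => X i ω) ⁻¹' Bset
                  = {ω | (r:ℝ) * (t/p) ≤ |∑ i ∈ Finset.range r, Y i ω|} := rfl
              rw [hpre]
              have hεpos : (0:ℝ) < (r:ℝ) * (t/p) := mul_pos hrpos hs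
              have htail := abs_sum_tail_le hYmeas hYindep hc hYb hY0
                (Nat.pos_of_ne_zero h0) hεpos
              refine htail.trans ?_
              rw [mul_le_mul_iff_of_pos_left (by norm_num : (0:ℝ) < 2), hR]
              apply Real.exp_le_exp.2
              rw [div_le_div_iff₀
                (mul_pos (mul_pos (by norm_num : (0:ℝ) < 2) hrpos) (pow_pos hc 2))
                (mul_pos (by linarith : (0:ℝ) < 8*p) (pow_pos hc 2))]
              have hts2 : t^2 = (t/p)^2 * p^2 := by field_simp
              have hmp2r : (m:ℝ)*p ≤ 2*(r:ℝ) := hr.2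
              have hkey : (m:ℝ)*t^2*(2*(r:ℝ)*(b-a)^2)
                  ≤ ((r:ℝ)*(t/p))^2*(8*p*(b-a)^2) := by
                have e1 : (m:ℝ)*t^2*(2*(r:ℝ)*(b-a)^2)
                    = (2*((m:ℝ)*p)) * (p*(t/p)^2*(r:ℝ)*(b-a)^2) := by rw [hts2]; ring
                have e2 : ((r:ℝ)*(t/p))^2*(8*p*(b-a)^2)
                    = (8*(r:ℝ)) * (p*(t/p)^2*(r:ℝ)*(b-a)^2) := by ring
                rw [e1, e2]
                refine mul_le_mul_of_nonneg_right ?_ (by positivity)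
                linarith
              linarith [hkey]
        _ ≤ ∑ r ∈ Finset.range (m+1), binomPMF m p r * (2 * R) := by
            refine Finset.sum_le_sum_of_subset_of_nonneg (Finset.filter_subset _ _) ?_
            intro r _ _
            exact mul_nonneg (binomPMF_nonneg hp.le hp1 r) (by positivity)
        _ = 2 * R := by
            rw [← Finset.sum_mul, binomPMF_sum, one_mul]
    linarith
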